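/- arXiv:2401.00548 — 4 statements merged into one kernel-verified Lean document; each statement's English description precedes it below -/
import Mathlib

section
/- For complex numbers a and b, the limit as k → ∞ (over natural numbers k) of k^(b−a) · Γ(k+a)/Γ(k+b) equals 1. -/
open Filter Complex Topology

private lemma ev_ne (c : ℂ) : ∀ᶠ n : ℕ in atTop, (n : ℂ) + c ≠ 0 := by
  filter_upwards [eventually_gt_atTop ⌈‖c‖⌉₊] with n hn h
  have hc : c = -(n : ℂ) := by linear_combination h
  have : ‖c‖ = (n : ℝ) := by simp [hc]
  have h1 : (n : ℝ) ≤ ⌈‖c‖⌉₊ := this ▸ Nat.le_ceil _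
  have h2 : ((⌈‖c‖⌉₊ : ℕ) : ℝ) < n := by exact_mod_cast hn
  linarith

private lemma inv_tendsto : Tendsto (fun n : ℕ => ((n : ℂ))⁻¹) atTop (𝓝 0) := by
  have h := tendsto_inv_atTop_nhds_zero_nat (𝕜 := ℝ)
  have := (Complex.continuous_ofReal.tendsto 0).comp h
  simpa [Function.comp_def] using this

private lemma div_lin_tendsto (c d : ℂ) :
    Tendsto (fun n : ℕ => ((n : ℂ) + c) / ((n : ℂ) + d)) atTop (𝓝 1) := by
  have hc : Tendsto (fun n : ℕ => 1 + c * ((n : ℂ))⁻¹) atTop (𝓝 1) := by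
    simpa using tendsto_const_nhds.add (tendsto_const_nhds.mul inv_tendsto)
  have hd : Tendsto (fun n : ℕ => 1 + d * ((n : ℂ))⁻¹) atTop (𝓝 1) := by
    simpa using tendsto_const_nhds.add (tendsto_const_nhds.mul inv_tendsto)
  have h := hc.div hd one_ne_zero
  rw [div_one] at h
  refine Tendsto.congr' ?_ h
  filter_upwards [eventually_gt_atTop 0, ev_ne d] with n hn hd0
  have hn0 : (n : ℂ) ≠ 0 := Nat.cast_ne_zero.mpr hn.ne'
  simp only [Pi.div_apply]
  field_simp

private lemma gamma_prod (s : ℂ) (hs : ∀ m : ℕ, s ≠ -m) (n : ℕ) :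
    Complex.Gamma (s + n) = Complex.Gamma s * ∏ j ∈ Finset.range n, (s + j) := by
  induction n with
  | zero => simp
  | succ n ih =>
    have hne : s + n ≠ 0 := by
      intro h
      exact hs n (by linear_combination h)
    have : s + (n + 1 : ℕ) = (s + n) + 1 := by push_cast; ring
    rw [this, Complex.Gamma_add_one _ hne, ih, Finset.prod_range_succ]
    ring

private lemma aux2 (s : ℂ) (hs : ∀ m : ℕ, s ≠ -m) :
    Tendsto (fun n : ℕ => (n : ℂ) ^ s * n.factorial / Complex.Gamma (s + n + 1))
      atTop (𝓝 1) := by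
  have h1 := (Complex.GammaSeq_tendsto_Gamma s).div_const (Complex.Gamma s)
  rw [div_self (Complex.Gamma_ne_zero hs)] at h1
  refine h1.congr fun n => ?_
  have hprod := gamma_prod s hs (n + 1)
  have hcast : s + ((n + 1 : ℕ) : ℂ) = s + n + 1 := by push_cast; ring
  rw [hcast] at hprod
  rw [Complex.GammaSeq, div_div, hprod, mul_comm (Complex.Gamma s)]

private lemma aux3 (s : ℂ) :
    Tendsto (fun n : ℕ => (n : ℂ) ^ s * n.factorial / Complex.Gamma (s + n + 1))
      atTop (𝓝 1) := by
  obtain ⟨k, hk⟩ := exists_nat_gt (-s.re)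
  have key : ∀ k : ℕ, ∀ s : ℂ, -(k : ℝ) < s.re →
      Tendsto (fun n : ℕ => (n : ℂ) ^ s * n.factorial / Complex.Gamma (s + n + 1))
        atTop (𝓝 1) := by
    intro k
    induction k with
    | zero =>
      intro s hs
      refine aux2 s fun m hm => ?_
      have : s.re = -(m : ℝ) := by rw [hm]; simp
      simp only [Nat.cast_zero, neg_zero] at hs
      rw [this] at hs
      have hm0 : (0:ℝ) ≤ (m:ℝ) := Nat.cast_nonneg m
      linarith
    | succ k ih =>
      intro s hs
      have h1 : Tendsto (fun n : ℕ => (n : ℂ) ^ (s + 1) * n.factorial /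
          Complex.Gamma (s + 1 + n + 1)) atTop (𝓝 1) := by
        refine ih (s + 1) ?_
        have : (s + 1).re = s.re + 1 := by simp
        rw [this]
        push_cast at hs ⊢
        linarith
      have h2 : Tendsto (fun n : ℕ => ((n : ℂ) + (s + 1)) / ((n : ℂ) + 0)) atTop (𝓝 1) :=
        div_lin_tendsto (s + 1) 0
      have h3 := h1.mul h2
      rw [one_mul] at h3
      refine Tendsto.congr' ?_ h3
      filter_upwards [eventually_gt_atTop 0, ev_ne (s + 1)] with n hn hne
      have hn0 : (n : ℂ) ≠ 0 := Nat.cast_ne_zero.mpr hn.ne'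
      have hG : Complex.Gamma (s + 1 + n + 1) = (s + n + 1) * Complex.Gamma (s + n + 1) := by
        have : s + 1 + n + 1 = (s + n + 1) + 1 := by ring
        rw [this, Complex.Gamma_add_one _ (by rw [add_comm (n:ℂ)] at hne; convert hne using 1; ring)]
      have hpow : (n : ℂ) ^ (s + 1) = (n : ℂ) ^ s * n := by
        rw [cpow_add _ _ hn0, cpow_one]
      have hne' : s + n + 1 ≠ 0 := by
        intro h; apply hne; linear_combination h
      have he : (n:ℂ) + (s + 1) = s + n + 1 := by ring
      rw [hG, hpow, add_zero, he, div_mul_div_comm]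
      have e1 : (n:ℂ) ^ s * (n:ℂ) * n.factorial * (s + n + 1)
          = ((s + n + 1) * n) * ((n:ℂ) ^ s * n.factorial) := by ring
      have e2 : (s + (n:ℂ) + 1) * Complex.Gamma (s + n + 1) * (n:ℂ)
          = ((s + n + 1) * n) * Complex.Gamma (s + n + 1) := by ring
      rw [e1, e2, mul_div_mul_left _ _ (mul_ne_zero hne' hn0)]

  exact key k s (by linarith)

theorem gamma_ratio_limit (a b : ℂ) :
    Tendsto (fun k : ℕ => (k : ℂ) ^ (b - a) * Complex.Gamma (k + a) / Complex.Gamma (k + b))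
      atTop (nhds 1) := by
  have ha := aux3 a
  have hb := aux3 b
  have hq : Tendsto (fun n : ℕ => ((n : ℂ) + b) / ((n : ℂ) + a)) atTop (𝓝 1) :=
    div_lin_tendsto b a
  have h := (hb.div ha one_ne_zero).mul hq
  rw [div_one, one_mul] at h
  refine Tendsto.congr' ?_ h
  have hGa : ∀ᶠ n : ℕ in atTop, Complex.Gamma (a + n) ≠ 0 := by
    filter_upwards [eventually_gt_atTop ⌈-a.re⌉₊] with n hn
    refine Complex.Gamma_ne_zero_of_re_pos ?_
    have h1 : -a.re ≤ (⌈-a.re⌉₊ : ℝ) := Nat.le_ceil _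
    have h2 : ((⌈-a.re⌉₊ : ℕ) : ℝ) < n := by exact_mod_cast hn
    have : (a + (n : ℂ)).re = a.re + n := by simp
    rw [this]; linarith
  have hGb : ∀ᶠ n : ℕ in atTop, Complex.Gamma (b + n) ≠ 0 := by
    filter_upwards [eventually_gt_atTop ⌈-b.re⌉₊] with n hn
    refine Complex.Gamma_ne_zero_of_re_pos ?_
    have h1 : -b.re ≤ (⌈-b.re⌉₊ : ℝ) := Nat.le_ceil _
    have h2 : ((⌈-b.re⌉₊ : ℕ) : ℝ) < n := by exact_mod_cast hn
    have : (b + (n : ℂ)).re = b.re + n := by simp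
    rw [this]; linarith
  filter_upwards [eventually_gt_atTop 0, ev_ne a, ev_ne b, hGa, hGb] with n hn hna hnb ha0 hb0
  have hn0 : (n : ℂ) ≠ 0 := Nat.cast_ne_zero.mpr hn.ne'
  have hGa1 : Complex.Gamma (a + n + 1) = ((n : ℂ) + a) * Complex.Gamma (a + n) := by
    rw [Complex.Gamma_add_one _ (by rwa [add_comm]), add_comm a]
  have hGb1 : Complex.Gamma (b + n + 1) = ((n : ℂ) + b) * Complex.Gamma (b + n) := by
    rw [Complex.Gamma_add_one _ (by rwa [add_comm]), add_comm b]
  have hpow : (n : ℂ) ^ (b - a) = (n : ℂ) ^ b / (n : ℂ) ^ a := cpow_sub _ _ hn0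
  have hpa : (n : ℂ) ^ a ≠ 0 := by
    simp [cpow_eq_zero_iff, hn0]
  have hpb : (n : ℂ) ^ b ≠ 0 := by
    simp [cpow_eq_zero_iff, hn0]
  have hfac : ((n.factorial : ℂ)) ≠ 0 := Nat.cast_ne_zero.mpr n.factorial_ne_zero
  have hca : Complex.Gamma ((n : ℂ) + a) = Complex.Gamma (a + n) := by rw [add_comm]
  have hcb : Complex.Gamma ((n : ℂ) + b) = Complex.Gamma (b + n) := by rw [add_comm]
  simp only [Pi.div_apply]
  rw [hpow, hca, hcb, hGa1, hGb1]
  field_simp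
end

section
/- Let α ∈ (1/2, 1). Then there exists a positive constant C such that for all n ≥ 0, the sum over j from 0 to n of (Γ(j+α)/Γ(j+1))² is at most C·(n+1)^(2α−1). -/
open Finset

/-- Wendel-type inequality via log-convexity of Gamma. -/
lemma wendel_sq (α x : ℝ) (hα0 : 0 < α) (hα1 : α < 1) (hx : 0 < x) :
    Real.Gamma (x + α) ^ 2 ≤ Real.Gamma x ^ 2 * x ^ (2 * α) := by
  have hG : 0 < Real.Gamma x := Real.Gamma_pos_of_pos hx
  have h := Real.Gamma_mul_add_mul_le_rpow_Gamma_mul_rpow_Gamma hx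
    (by linarith : (0:ℝ) < x + 1) (by linarith : 0 < 1 - α) hα0 (by ring)
  have hxx : (1 - α) * x + α * (x + 1) = x + α := by ring
  rw [hxx, Real.Gamma_add_one hx.ne'] at h
  have h2 : Real.Gamma (x + α) ^ 2 ≤ (Real.Gamma x ^ (1 - α) * (x * Real.Gamma x) ^ α) ^ 2 := by
    have h0 : 0 ≤ Real.Gamma (x + α) := (Real.Gamma_pos_of_pos (by linarith)).le
    have hnn : (0:ℝ) ≤ Real.Gamma x ^ (1 - α) * (x * Real.Gamma x) ^ α := by positivity
    nlinarith
  refine h2.trans_eq ?_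
  rw [Real.mul_rpow hx.le hG.le, mul_pow, mul_pow,
    ← Real.rpow_natCast (Real.Gamma x ^ (1-α)) 2,
    ← Real.rpow_natCast (x ^ α) 2, ← Real.rpow_natCast (Real.Gamma x ^ α) 2,
    ← Real.rpow_mul hG.le, ← Real.rpow_mul hx.le, ← Real.rpow_mul hG.le]
  push_cast
  rw [mul_comm (Real.Gamma x ^ ((1-α)*2)) _, mul_assoc, ← Real.rpow_add hG,
    show α*2 + (1-α)*2 = (2:ℝ) by ring, show α * 2 = 2 * α by ring, Real.rpow_two]
  ring

theorem gamma_ratio_sum_bound (α : ℝ) (hα : α ∈ Set.Ioo (1/2 : ℝ) 1) :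
    ∃ C : ℝ, 0 < C ∧ ∀ n : ℕ,
      ∑ j ∈ Finset.range (n + 1), (Real.Gamma (j + α) / Real.Gamma (j + 1)) ^ 2
        ≤ C * (n + 1 : ℝ) ^ (2 * α - 1) := by
  obtain ⟨h1, h2⟩ := hα
  have hα0 : 0 < α := by linarith
  have hp : 0 < 2 * α - 1 := by linarith
  set p := 2 * α - 1 with hpdef
  refine ⟨Real.Gamma α ^ 2 + 1 / p, by positivity, fun n => ?_⟩
  set U : ℕ → ℝ := fun i =>
    Real.Gamma ((i : ℝ) + 1 + α) ^ 2 / (Real.Gamma ((i : ℝ) + 1) * Real.Gamma ((i : ℝ) + 2))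
    with hU
  -- upper bound on U m via Wendel
  have hUbound : ∀ m : ℕ, U m ≤ ((m : ℝ) + 1) ^ p := by
    intro m
    set x : ℝ := (m : ℝ) + 1 with hx
    have hx0 : (0:ℝ) < x := by positivity
    have hG : 0 < Real.Gamma x := Real.Gamma_pos_of_pos hx0
    have hΓ2 : Real.Gamma ((m:ℝ) + 2) = x * Real.Gamma x := by
      rw [show (m:ℝ) + 2 = x + 1 by ring, Real.Gamma_add_one hx0.ne']
    have hw := wendel_sq α x hα0 h2 hx0
    have hxp : x ^ p = x ^ (2*α) / x := by
      rw [hpdef, Real.rpow_sub hx0, Real.rpow_one]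
    rw [hU]
    simp only [hΓ2]
    rw [hxp, div_le_div_iff₀ (by positivity) hx0]
    calc Real.Gamma (x + α) ^ 2 * x ≤ Real.Gamma x ^ 2 * x ^ (2*α) * x := by nlinarith
      _ = x ^ (2*α) * (Real.Gamma x * (x * Real.Gamma x)) := by ring
  -- per-term bound for j = i+1 ≥ 1
  have hterm : ∀ i : ℕ,
      p * (Real.Gamma ((((i+1) : ℕ) : ℝ) + α) / Real.Gamma ((((i+1) : ℕ) : ℝ) + 1)) ^ 2
        ≤ U (i + 1) - U i := by
    intro i
    set x : ℝ := (i : ℝ) + 1 with hxdef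
    have hx0 : (0:ℝ) < x := by positivity
    have hG : 0 < Real.Gamma x := Real.Gamma_pos_of_pos hx0
    have hA : 0 < Real.Gamma (x + α) := Real.Gamma_pos_of_pos (by positivity)
    have e1 : Real.Gamma (x + 1) = x * Real.Gamma x := Real.Gamma_add_one hx0.ne'
    have e2 : Real.Gamma (x + 2) = (x + 1) * (x * Real.Gamma x) := by
      rw [show x + 2 = (x+1) + 1 by ring, Real.Gamma_add_one (by positivity), e1]
    have e3 : Real.Gamma (x + 1 + α) = (x + α) * Real.Gamma (x + α) := by
      rw [show x + 1 + α = (x + α) + 1 by ring, Real.Gamma_add_one (by positivity)]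
    have hUi1 : U (i+1) = ((x + α) * Real.Gamma (x + α)) ^ 2
        / ((x * Real.Gamma x) * ((x + 1) * (x * Real.Gamma x))) := by
      rw [hU]
      push_cast
      rw [show (i:ℝ) + 1 + 1 + α = x + 1 + α by rw [hxdef], show (i:ℝ) + 1 + 1 = x + 1 by rw [hxdef],
        show (i:ℝ) + 1 + 2 = x + 2 by rw [hxdef], e3, e1, e2]
    have hUi : U i = Real.Gamma (x + α) ^ 2 / (Real.Gamma x * (x * Real.Gamma x)) := by
      simp only [hU]
      rw [show (i:ℝ) + 1 + α = x + α by rw [hxdef], show (i:ℝ) + 1 = x by rw [hxdef],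
        show (i:ℝ) + 2 = x + 1 by rw [hxdef]; ring, e1]
    have hterm' : (Real.Gamma ((((i+1) : ℕ) : ℝ) + α) / Real.Gamma ((((i+1) : ℕ) : ℝ) + 1)) ^ 2
        = Real.Gamma (x + α) ^ 2 / (x * Real.Gamma x) ^ 2 := by
      rw [show (((i+1) : ℕ) : ℝ) = x by push_cast [hxdef]; ring, e1, div_pow]
    have hdiff : U (i+1) - U i
        = Real.Gamma (x + α) ^ 2 / (x * Real.Gamma x) ^ 2
            * (((x + α) ^ 2 - x * (x + 1)) / (x + 1)) := by
      rw [hUi1, hUi]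
      field_simp
    rw [hterm', hdiff, mul_comm p]
    have hb : (0:ℝ) ≤ Real.Gamma (x + α) ^ 2 / (x * Real.Gamma x) ^ 2 := by positivity
    refine mul_le_mul_of_nonneg_left ?_ hb
    rw [le_div_iff₀ (by positivity : (0:ℝ) < x + 1)]
    nlinarith [sq_nonneg (α - 1)]
  -- assemble
  have hsum : ∑ j ∈ Finset.range (n + 1), (Real.Gamma (j + α) / Real.Gamma (j + 1)) ^ 2
      = (Real.Gamma ((0:ℕ) + α) / Real.Gamma ((0:ℕ) + 1)) ^ 2
        + ∑ i ∈ Finset.range n,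
            (Real.Gamma ((((i+1):ℕ):ℝ) + α) / Real.Gamma ((((i+1):ℕ):ℝ) + 1)) ^ 2 := by
    rw [Finset.sum_range_succ' _ n]
    push_cast
    ring
  have htele : ∑ i ∈ Finset.range n, (U (i+1) - U i) = U n - U 0 := Finset.sum_range_sub U n
  have hb0 : (Real.Gamma ((0:ℕ) + α) / Real.Gamma ((0:ℕ) + 1)) ^ 2 = Real.Gamma α ^ 2 := by
    norm_num [Real.Gamma_one]
  have hU0 : 0 ≤ U 0 := by
    rw [hU]
    positivity
  have hsum2 : ∑ i ∈ Finset.range n,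
      (Real.Gamma ((((i+1):ℕ):ℝ) + α) / Real.Gamma ((((i+1):ℕ):ℝ) + 1)) ^ 2
      ≤ (U n - U 0) / p := by
    rw [← htele, Finset.sum_div]
    refine Finset.sum_le_sum fun i _ => ?_
    rw [le_div_iff₀ hp]
    rw [mul_comm]
    exact hterm i
  have hone : (1:ℝ) ≤ ((n:ℝ) + 1) ^ p := by
    apply Real.one_le_rpow (by norm_num [Nat.one_le_cast]) hp.le
  have hUn := hUbound n
  rw [hsum, hb0]
  calc Real.Gamma α ^ 2 + ∑ i ∈ Finset.range n,
        (Real.Gamma ((((i+1):ℕ):ℝ) + α) / Real.Gamma ((((i+1):ℕ):ℝ) + 1)) ^ 2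
      ≤ Real.Gamma α ^ 2 + (U n - U 0) / p := by linarith [hsum2]
    _ ≤ Real.Gamma α ^ 2 + ((n:ℝ) + 1) ^ p / p := by
        gcongr
        linarith
    _ ≤ (Real.Gamma α ^ 2 + 1 / p) * ((n:ℝ) + 1) ^ p := by
        have hg : 0 ≤ Real.Gamma α ^ 2 := sq_nonneg _
        rw [add_mul]
        gcongr
        · nlinarith
        · rw [one_div, div_eq_mul_inv, mul_comm]
end

section
/- Let μ be a nonzero finite nonnegative Borel measure on the unit circle and m ≥ 1. The space Ĥ_{μ,m} of holomorphic functions f(z) = Σ_{j≥m} aⱼzʲ on the unit disc with D_{μ,m}(f) < ∞, equipped with the norm √D_{μ,m}(·), is a reproducing kernel Hilbert space on the unit disc; i.e., point evaluations at every point of the disc are bounded linear functionals. -/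
open Metric MeasureTheory Set Filter intervalIntegral
open scoped ENNReal NNReal

/-- Normalized Lebesgue area measure on the unit disc (total mass 1). -/
noncomputable def normArea : Measure ℂ :=
  (ENNReal.ofReal (1 / Real.pi)) • (MeasureTheory.volume.restrict (ball (0 : ℂ) 1))

/-- The Poisson integral of a measure `μ` on the unit circle. -/
noncomputable def poisson (μ : Measure ℂ) (z : ℂ) : ℝ :=
  ∫ ζ, (1 - ‖z‖ ^ 2) / ‖z - ζ‖ ^ 2 ∂μ

/-- The weighted Dirichlet-type integral of order `m` of `f` with respect to `μ`. -/
noncomputable def Dmu (μ : Measure ℂ) (m : ℕ) (f : ℂ → ℂ) : ℝ≥0∞ :=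
  ENNReal.ofReal (1 / (m.factorial * (m - 1).factorial)) *
    ∫⁻ z, (‖iteratedDeriv m f z‖₊ : ℝ≥0∞) ^ 2 *
      ENNReal.ofReal (poisson μ z * (1 - ‖z‖ ^ 2) ^ (m - 1)) ∂normArea

lemma hasFPower {f : ℂ → ℂ} {a : ℕ → ℂ}
    (h : ∀ z ∈ ball (0 : ℂ) 1, HasSum (fun j => a j * z ^ j) (f z)) :
    HasFPowerSeriesOnBall f (FormalMultilinearSeries.ofScalars ℂ a) 0 1 := by
  constructor
  · apply ENNReal.le_of_forall_nnreal_lt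
    intro r hr
    have hr1 : (r : ℝ) < 1 := by exact_mod_cast hr
    have hz : ((r : ℝ) : ℂ) ∈ ball (0 : ℂ) 1 := by
      simp only [mem_ball_zero_iff, Complex.norm_real, Real.norm_eq_abs,
        abs_of_nonneg r.coe_nonneg]
      exact hr1
    have h0 : Filter.Tendsto (fun n => ‖a n * ((r : ℝ) : ℂ) ^ n‖) atTop (nhds 0) := by
      simpa using ((h _ hz).summable.tendsto_atTop_zero).norm
    apply FormalMultilinearSeries.le_radius_of_isBigO
    have : (fun n => ‖a n * ((r : ℝ) : ℂ) ^ n‖) =O[atTop] fun _ => (1 : ℝ) :=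
      h0.isBigO_one ℝ
    apply this.congr' _ (Eventually.of_forall fun _ => rfl)
    apply Eventually.of_forall
    intro n
    simp only [FormalMultilinearSeries.ofScalars_norm, norm_mul, norm_pow, Complex.norm_real,
      Real.norm_eq_abs, abs_of_nonneg r.coe_nonneg]
  · exact one_pos
  · intro y hy
    rw [zero_add]
    have hy' : y ∈ ball (0 : ℂ) 1 := by
      rw [mem_ball_zero_iff]
      simpa [← ofReal_norm] using hy
    have := h y hy'
    have e : (fun n => FormalMultilinearSeries.ofScalars ℂ a n (fun _ => y)) = fun j => a j * y ^ j := by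
      funext n
      rw [FormalMultilinearSeries.ofScalars_apply_eq, smul_eq_mul]
    rw [e]
    exact this

lemma iteratedDeriv_zero_of_lt {f : ℂ → ℂ} {a : ℕ → ℂ} {m : ℕ}
    (h : HasFPowerSeriesOnBall f (FormalMultilinearSeries.ofScalars ℂ a) 0 1)
    (ha : ∀ j < m, a j = 0) {j : ℕ} (hj : j < m) :
    iteratedDeriv j f 0 = 0 := by
  have := h.factorial_smul (1 : ℂ) j
  rw [iteratedDeriv_eq_iteratedFDeriv]
  rw [← this, FormalMultilinearSeries.ofScalars_apply_eq, ha j hj]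
  simp

lemma circleMVP {F : ℂ → ℂ} {z₀ : ℂ} {r : ℝ} (hr : 0 < r)
    (hF : DifferentiableOn ℂ F (closedBall z₀ r)) :
    2 * Real.pi * ‖F z₀‖ ≤ ∫ θ in (0:ℝ)..(2 * Real.pi), ‖F (circleMap z₀ r θ)‖ := by
  have key := hF.circleIntegral_sub_inv_smul (mem_ball_self hr)
  have h1 : ‖((2 * Real.pi * Complex.I : ℂ) • F z₀)‖ = 2 * Real.pi * ‖F z₀‖ := by
    rw [norm_smul]
    simp [abs_of_nonneg Real.pi_nonneg]
  rw [← h1, ← key]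
  unfold circleIntegral
  refine le_trans (intervalIntegral.norm_integral_le_integral_norm (by positivity)) ?_
  apply le_of_eq
  apply intervalIntegral.integral_congr
  intro θ _
  simp only [deriv_circleMap]
  have hcm : circleMap z₀ r θ - z₀ = circleMap 0 r θ := circleMap_sub_center _ _ _
  have hnc : ‖circleMap 0 r θ‖ = r := by
    simp [circleMap, abs_of_pos hr]
  rw [norm_smul, norm_smul, hcm, norm_mul, hnc, norm_inv, hnc]
  simp only [Complex.norm_I, mul_one]
  field_simp

lemma poisson_lower (μ : Measure ℂ) [IsFiniteMeasure μ]
    (hsupp : μ (sphere (0 : ℂ) 1)ᶜ = 0) {z : ℂ} (hz : ‖z‖ < 1) :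
    (1 - ‖z‖ ^ 2) / 4 * (μ Set.univ).toReal ≤ poisson μ z := by
  have hae : ∀ᵐ ζ ∂μ, ζ ∈ sphere (0:ℂ) 1 := by
    rw [ae_iff]
    have : {ζ : ℂ | ¬ ζ ∈ sphere (0:ℂ) 1} = (sphere (0:ℂ) 1)ᶜ := rfl
    rw [this, hsupp]
  have hz2 : (0:ℝ) ≤ 1 - ‖z‖ ^ 2 := by nlinarith [norm_nonneg z]
  have hmeas : AEStronglyMeasurable (fun ζ : ℂ => (1 - ‖z‖ ^ 2) / ‖z - ζ‖ ^ 2) μ := by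
    apply Measurable.aestronglyMeasurable
    apply Measurable.div measurable_const
    exact ((continuous_const.sub continuous_id).norm.pow 2).measurable
  have hint : Integrable (fun ζ : ℂ => (1 - ‖z‖ ^ 2) / ‖z - ζ‖ ^ 2) μ := by
    refine ⟨hmeas, HasFiniteIntegral.of_bounded (C := (1 - ‖z‖ ^ 2) / (1 - ‖z‖) ^ 2) ?_⟩
    filter_upwards [hae] with ζ hζ
    have h1 : ‖ζ‖ = 1 := by simpa using hζ
    have h2 : 1 - ‖z‖ ≤ ‖z - ζ‖ := by
      calc 1 - ‖z‖ = ‖ζ‖ - ‖z‖ := by rw [h1]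
        _ ≤ ‖ζ - z‖ := norm_sub_norm_le _ _
        _ = ‖z - ζ‖ := norm_sub_rev _ _
    have hpos : 0 < 1 - ‖z‖ := by linarith
    rw [Real.norm_eq_abs, abs_of_nonneg (div_nonneg hz2 (sq_nonneg _))]
    apply div_le_div_of_nonneg_left hz2 (by positivity)
    nlinarith
  have hlow : ∀ᵐ ζ ∂μ, (1 - ‖z‖ ^ 2) / 4 ≤ (1 - ‖z‖ ^ 2) / ‖z - ζ‖ ^ 2 := by
    filter_upwards [hae] with ζ hζ
    have h1 : ‖ζ‖ = 1 := by simpa using hζ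
    have h2 : 1 - ‖z‖ ≤ ‖z - ζ‖ := by
      calc 1 - ‖z‖ = ‖ζ‖ - ‖z‖ := by rw [h1]
        _ ≤ ‖ζ - z‖ := norm_sub_norm_le _ _
        _ = ‖z - ζ‖ := norm_sub_rev _ _
    have hub : ‖z - ζ‖ ≤ 2 := by
      calc ‖z - ζ‖ ≤ ‖z‖ + ‖ζ‖ := norm_sub_le _ _
        _ ≤ 2 := by rw [h1]; linarith
    apply div_le_div_of_nonneg_left hz2 (by nlinarith)
    nlinarith
  calc (1 - ‖z‖ ^ 2) / 4 * (μ Set.univ).toReal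
      = ∫ _ζ, (1 - ‖z‖ ^ 2) / 4 ∂μ := by
        rw [MeasureTheory.integral_const, smul_eq_mul, mul_comm]
        rfl
    _ ≤ poisson μ z := integral_mono_ae (integrable_const _) hint hlow

lemma areaMVP {g : ℂ → ℂ} {z₀ : ℂ} {R : ℝ} (hR : 0 < R)
    (hg : DifferentiableOn ℂ g (closedBall z₀ R)) :
    ENNReal.ofReal (Real.pi * R ^ 2 * ‖g z₀‖ ^ 2) ≤
      ∫⁻ z in ball z₀ R, (‖g z‖₊ : ℝ≥0∞) ^ 2 ∂volume := by
  classical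
  set h : ℂ → ℝ := fun y => ‖g (z₀ + y)‖ ^ 2 with hh
  have hmaps : MapsTo (fun y : ℂ => z₀ + y) (closedBall (0:ℂ) R) (closedBall z₀ R) := by
    intro y hy
    simpa [mem_closedBall, dist_eq_norm] using (by simpa [mem_closedBall, dist_eq_norm] using hy : ‖y‖ ≤ R)
  have hcont : ContinuousOn h (closedBall (0:ℂ) R) := by
    apply ContinuousOn.pow
    exact ((hg.continuousOn.comp ((continuous_const.add continuous_id).continuousOn) hmaps)).norm
  have hnn : ∀ y, 0 ≤ h y := fun y => sq_nonneg _
  set f : ℂ → ℝ := (ball (0:ℂ) R).indicator h with hf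
  -- measurability of f
  have hfm : Measurable f := by
    apply measurable_of_Ioi
    intro c
    rcases lt_or_ge c 0 with hc | hc
    · have : f ⁻¹' Ioi c = univ := by
        ext y
        simp only [mem_preimage, mem_Ioi, mem_univ, iff_true]
        refine lt_of_lt_of_le hc ?_
        by_cases hy : y ∈ ball (0:ℂ) R <;> simp [hf, indicator, hy, hnn y]
      rw [this]; exact MeasurableSet.univ
    · have : f ⁻¹' Ioi c = ball (0:ℂ) R ∩ h ⁻¹' Ioi c := by
        ext y
        by_cases hy : y ∈ ball (0:ℂ) R <;>
          simp [hf, indicator, hy, mem_Ioi, not_lt.2 hc]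
      rw [this]
      exact ((hcont.mono ball_subset_closedBall).isOpen_inter_preimage isOpen_ball
        isOpen_Ioi).measurableSet
  -- bound
  obtain ⟨M, hM⟩ := (isCompact_closedBall (0:ℂ) R).exists_bound_of_continuousOn hcont
  have hfb : ∀ y, |f y| ≤ max M 0 := by
    intro y
    by_cases hy : y ∈ ball (0:ℂ) R
    · simp only [hf, indicator_of_mem hy]
      rw [abs_of_nonneg (hnn y)]
      exact le_max_of_le_left ((le_abs_self _).trans (by simpa using hM y (ball_subset_closedBall hy)))
    · simp [hf, indicator_of_notMem hy]
  -- reduce to a real integral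
  have hIntcb : IntegrableOn (fun z => ‖g z‖ ^ 2) (closedBall z₀ R) volume :=
    (hg.continuousOn.norm.pow 2).integrableOn_compact (isCompact_closedBall _ _)
  have hInt : IntegrableOn (fun z => ‖g z‖ ^ 2) (ball z₀ R) volume :=
    hIntcb.mono_set ball_subset_closedBall
  have hlin : ENNReal.ofReal (∫ z in ball z₀ R, ‖g z‖ ^ 2) =
      ∫⁻ z in ball z₀ R, (‖g z‖₊ : ℝ≥0∞) ^ 2 ∂volume := by
    rw [ofReal_integral_eq_lintegral_ofReal hInt (Eventually.of_forall fun z => sq_nonneg _)]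
    apply lintegral_congr
    intro z
    rw [ENNReal.ofReal_pow (norm_nonneg _), ofReal_norm, enorm_eq_nnnorm]
  rw [← hlin]
  apply ENNReal.ofReal_le_ofReal
  -- change variables: translation
  have htrans : ∫ z in ball z₀ R, ‖g z‖ ^ 2 = ∫ y in ball (0:ℂ) R, h y := by
    have hpre : (fun y : ℂ => z₀ + y) ⁻¹' (ball z₀ R) = ball (0:ℂ) R := by
      ext y
      simp [mem_ball, dist_eq_norm]
    rw [← (measurePreserving_add_left volume z₀).setIntegral_preimage_emb
      (MeasurableEquiv.addLeft z₀).measurableEmbedding (fun z => ‖g z‖ ^ 2) (ball z₀ R), hpre]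
  rw [htrans, ← MeasureTheory.integral_indicator measurableSet_ball, ← hf,
    ← Complex.integral_comp_polarCoord_symm f]
  -- restrict to the finite rectangle
  set S : Set (ℝ × ℝ) := Ioo (0:ℝ) R ×ˢ Ioo (-Real.pi) Real.pi with hS
  have hSsub : S ⊆ polarCoord.target := by
    rw [polarCoord_target]
    exact prod_mono Ioo_subset_Ioi_self subset_rfl
  have hres : ∫ p in polarCoord.target, p.1 • f (Complex.polarCoord.symm p) =
      ∫ p in S, p.1 • f (Complex.polarCoord.symm p) := by
    apply setIntegral_eq_of_subset_of_forall_diff_eq_zero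
      polarCoord.open_target.measurableSet hSsub
    rintro ⟨r, θ⟩ ⟨hmem, hnot⟩
    rw [polarCoord_target] at hmem
    have hr0 : 0 < r := hmem.1
    have hrR : R ≤ r := by
      by_contra hlt
      exact hnot ⟨⟨hr0, not_le.1 hlt⟩, hmem.2⟩
    have : Complex.polarCoord.symm (r, θ) ∉ ball (0:ℂ) R := by
      rw [mem_ball_zero_iff]
      push_neg
      rw [Complex.norm_polarCoord_symm]
      simpa [abs_of_pos hr0] using hrR
    rw [hf, indicator_of_notMem this, smul_zero]
  rw [hres]
  -- measurability and integrability of the polar integrand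
  have hsymmc : Continuous fun p : ℝ × ℝ => Complex.polarCoord.symm p := by
    have : (fun p : ℝ × ℝ => Complex.polarCoord.symm p) =
        fun p : ℝ × ℝ => (p.1 : ℂ) * (Real.cos p.2 + Real.sin p.2 * Complex.I) :=
      funext fun p => Complex.polarCoord_symm_apply p
    rw [this]
    fun_prop
  have hGm : Measurable fun p : ℝ × ℝ => p.1 • f (Complex.polarCoord.symm p) :=
    measurable_fst.smul (hfm.comp hsymmc.measurable)
  have hSm : MeasurableSet S := measurableSet_Ioo.prod measurableSet_Ioo
  have hSfin : volume S ≠ ⊤ := by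
    rw [hS, Measure.volume_eq_prod, Measure.prod_prod, Real.volume_Ioo, Real.volume_Ioo]
    exact ENNReal.mul_ne_top ENNReal.ofReal_ne_top ENNReal.ofReal_ne_top
  haveI : IsFiniteMeasure (volume.restrict S) :=
    ⟨by rw [Measure.restrict_apply_univ]; exact hSfin.lt_top⟩
  have hGint : IntegrableOn (fun p : ℝ × ℝ => p.1 • f (Complex.polarCoord.symm p)) S volume := by
    refine ⟨hGm.aestronglyMeasurable, HasFiniteIntegral.of_bounded
      (C := R * max M 0) ?_⟩
    refine (ae_restrict_iff' hSm).2 (Eventually.of_forall ?_)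
    rintro ⟨r, θ⟩ hmem
    have h1 : |r| ≤ R := by
      rw [abs_of_pos hmem.1.1]; exact hmem.1.2.le
    calc ‖r • f (Complex.polarCoord.symm (r, θ))‖
        = |r| * |f (Complex.polarCoord.symm (r, θ))| := by
          rw [smul_eq_mul, Real.norm_eq_abs, abs_mul]
      _ ≤ R * max M 0 := by
          apply mul_le_mul h1 (hfb _) (abs_nonneg _) hR.le
  -- Fubini
  rw [hS, Measure.volume_eq_prod, setIntegral_prod _ (by rwa [← Measure.volume_eq_prod, ← hS])]
  have hcirc : ∀ r θ : ℝ, Complex.polarCoord.symm (r, θ) = circleMap 0 r θ := by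
    intro r θ
    rw [Complex.polarCoord_symm_apply]
    simp [circleMap, Complex.exp_mul_I]
  have hq : ∀ r ∈ Ioo (0:ℝ) R, 2 * Real.pi * ‖g z₀‖ ^ 2 ≤
      ∫ θ in (0:ℝ)..(2 * Real.pi), ‖g (circleMap z₀ r θ)‖ ^ 2 := by
    intro r hr
    have := circleMVP hr.1 ((hg.mono (closedBall_subset_closedBall hr.2.le)).pow 2)
    simpa [norm_pow] using this
  have hinner : ∀ r ∈ Ioo (0:ℝ) R,
      Real.pi * 2 * ‖g z₀‖ ^ 2 * r ≤
        ∫ θ in Ioo (-Real.pi) Real.pi, r • f (Complex.polarCoord.symm (r, θ)) := by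
    intro r hr
    have heval : ∀ θ : ℝ, r • f (Complex.polarCoord.symm (r, θ)) =
        r * ‖g (circleMap z₀ r θ)‖ ^ 2 := by
      intro θ
      rw [hcirc, smul_eq_mul]
      congr 1
      have hmem : circleMap 0 r θ ∈ ball (0:ℂ) R := by
        rw [mem_ball_zero_iff]
        simpa [circleMap, abs_of_pos hr.1] using hr.2
      have harg : z₀ + circleMap 0 r θ = circleMap z₀ r θ := by simp [circleMap]
      rw [hf, indicator_of_mem hmem]
      simp only [hh, harg]
    have hval : (∫ θ in Ioo (-Real.pi) Real.pi, r • f (Complex.polarCoord.symm (r, θ))) =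
        r * ∫ θ in Ioo (-Real.pi) Real.pi, ‖g (circleMap z₀ r θ)‖ ^ 2 := by
      simp_rw [heval]
      rw [MeasureTheory.integral_const_mul]
    have hIoo : (∫ θ in Ioo (-Real.pi) Real.pi, ‖g (circleMap z₀ r θ)‖ ^ 2) =
        ∫ θ in (-Real.pi)..Real.pi, ‖g (circleMap z₀ r θ)‖ ^ 2 := by
      rw [intervalIntegral.integral_of_le (by linarith [Real.pi_pos]),
        integral_Ioc_eq_integral_Ioo]
    have hper : Function.Periodic (fun θ => ‖g (circleMap z₀ r θ)‖ ^ 2) (2 * Real.pi) := by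
      intro θ
      simp [periodic_circleMap z₀ r θ]
    have hshift : (∫ θ in (-Real.pi)..Real.pi, ‖g (circleMap z₀ r θ)‖ ^ 2) =
        ∫ θ in (0:ℝ)..(2 * Real.pi), ‖g (circleMap z₀ r θ)‖ ^ 2 := by
      have h2 := hper.intervalIntegral_add_eq (-Real.pi) 0
      rw [show (-Real.pi + 2 * Real.pi) = Real.pi by ring, zero_add] at h2
      exact h2
    rw [hval, hIoo, hshift]
    have := hq r hr
    calc Real.pi * 2 * ‖g z₀‖ ^ 2 * r = r * (2 * Real.pi * ‖g z₀‖ ^ 2) := by ring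
      _ ≤ r * ∫ θ in (0:ℝ)..(2 * Real.pi), ‖g (circleMap z₀ r θ)‖ ^ 2 :=
          mul_le_mul_of_nonneg_left this hr.1.le
  have hφint : IntegrableOn
      (fun r => ∫ θ in Ioo (-Real.pi) Real.pi, r • f (Complex.polarCoord.symm (r, θ)))
      (Ioo (0:ℝ) R) volume := by
    have h3 := hGint
    rw [hS, IntegrableOn, Measure.volume_eq_prod, ← Measure.prod_restrict] at h3
    exact h3.integral_prod_left
  have hcint : IntegrableOn (fun r : ℝ => Real.pi * 2 * ‖g z₀‖ ^ 2 * r) (Ioo (0:ℝ) R) volume :=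
    ((continuous_const.mul continuous_id).integrableOn_Icc).mono_set Ioo_subset_Icc_self
  calc Real.pi * R ^ 2 * ‖g z₀‖ ^ 2
      = ∫ r in Ioo (0:ℝ) R, Real.pi * 2 * ‖g z₀‖ ^ 2 * r := by
        rw [MeasureTheory.integral_const_mul (Real.pi * 2 * ‖g z₀‖ ^ 2) (fun r : ℝ => r),
          ← integral_Ioc_eq_integral_Ioo, ← intervalIntegral.integral_of_le hR.le,
          integral_id]
        ring
    _ ≤ _ := setIntegral_mono_on hcint hφint measurableSet_Ioo hinner

/-- The space `Ĥ_{μ,m}`, with the squared semi-norm `D_{μ,m}`, is a reproducing kernel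
Hilbert space on the unit disc: evaluation at each point of the disc is a bounded
linear functional. -/
theorem eval_bounded (μ : Measure ℂ) [IsFiniteMeasure μ]
    (hsupp : μ (sphere (0 : ℂ) 1)ᶜ = 0) (hμ : μ ≠ 0) (m : ℕ) (hm : 1 ≤ m) :
    ∀ w ∈ ball (0 : ℂ) 1, ∃ C : ℝ, 0 < C ∧
      ∀ (f : ℂ → ℂ) (a : ℕ → ℂ),
        (∀ z ∈ ball (0 : ℂ) 1, HasSum (fun j => a j * z ^ j) (f z)) →
        (∀ j < m, a j = 0) →
        Dmu μ m f ≠ ⊤ →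
        ENNReal.ofReal (‖f w‖ ^ 2) ≤ ENNReal.ofReal C * Dmu μ m f := by
  intro w hw
  rw [mem_ball_zero_iff] at hw
  -- geometric constants
  set ρ : ℝ := (1 + ‖w‖) / 2 with hρdef
  have hρ0 : 0 < ρ := by positivity
  have hρ1 : ρ < 1 := by rw [hρdef]; linarith
  have hwρ : ‖w‖ ≤ ρ := by rw [hρdef]; linarith
  set R : ℝ := (1 - ρ) / 2 with hRdef
  have hR0 : 0 < R := by rw [hRdef]; linarith
  set ρ₂ : ℝ := ρ + R with hρ₂def
  have hρ₂1 : ρ₂ < 1 := by rw [hρ₂def, hRdef]; linarith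
  have hρ₂0 : 0 < ρ₂ := by positivity
  have hρ₂sq : 0 < 1 - ρ₂ ^ 2 := by nlinarith
  -- the measure is positive
  have hT : 0 < (μ Set.univ).toReal := by
    apply ENNReal.toReal_pos
    · simpa using hμ
    · exact measure_ne_top μ _
  set T : ℝ := (μ Set.univ).toReal with hTdef
  -- the weight lower bound
  set δ : ℝ := (1 - ρ₂ ^ 2) / 4 * T * (1 - ρ₂ ^ 2) ^ (m - 1) with hδdef
  have hδ0 : 0 < δ := by positivity
  set c₁ : ℝ := 1 / (m.factorial * (m - 1).factorial) with hc₁def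
  have hc₁0 : 0 < c₁ := by positivity
  set ε : ℝ := c₁ * R ^ 2 * δ with hεdef
  have hε0 : 0 < ε := by positivity
  refine ⟨1 / ε, by positivity, ?_⟩
  intro f a hfs ha hD
  -- analyticity
  have hp := hasFPower hfs
  have hA : AnalyticOnNhd ℂ f (ball (0:ℂ) 1) := by
    intro x hx
    apply hp.analyticAt_of_mem
    rw [mem_ball_zero_iff] at hx
    rw [mem_emetric_ball_zero_iff, ← ofReal_norm, ENNReal.ofReal_lt_one]
    exact_mod_cast hx
  set g : ℂ → ℂ := iteratedDeriv m f with hgdef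
  -- pointwise bound on the m-th derivative
  have hpoint : ∀ z₀ ∈ closedBall (0:ℂ) ρ,
      ENNReal.ofReal (ε * ‖g z₀‖ ^ 2) ≤ Dmu μ m f := by
    intro z₀ hz₀
    rw [mem_closedBall_zero_iff] at hz₀
    have hsubcb : closedBall z₀ R ⊆ ball (0:ℂ) 1 := by
      intro x hx
      rw [mem_closedBall, dist_eq_norm] at hx
      rw [mem_ball_zero_iff]
      calc ‖x‖ = ‖x - z₀ + z₀‖ := by ring_nf
        _ ≤ ‖x - z₀‖ + ‖z₀‖ := norm_add_le _ _
        _ ≤ R + ρ := add_le_add hx hz₀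
        _ < 1 := by rw [← hρ₂def] at *; linarith [hρ₂1]
    have hgd : DifferentiableOn ℂ g (closedBall z₀ R) := by
      intro x hx
      have : AnalyticOnNhd ℂ (deriv^[m] f) (ball (0:ℂ) 1) := hA.iterated_deriv m
      rw [hgdef, iteratedDeriv_eq_iterate]
      exact ((this x (hsubcb hx)).differentiableAt).differentiableWithinAt
    -- weight bound on ball z₀ R
    have hweight : ∀ z ∈ ball z₀ R, δ ≤ poisson μ z * (1 - ‖z‖ ^ 2) ^ (m - 1) := by
      intro z hz
      rw [mem_ball, dist_eq_norm] at hz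
      have hz2 : ‖z‖ ≤ ρ₂ := by
        calc ‖z‖ = ‖z - z₀ + z₀‖ := by ring_nf
          _ ≤ ‖z - z₀‖ + ‖z₀‖ := norm_add_le _ _
          _ ≤ R + ρ := add_le_add hz.le hz₀
          _ = ρ₂ := by rw [hρ₂def]; ring
      have hz1 : ‖z‖ < 1 := lt_of_le_of_lt hz2 hρ₂1
      have hzsq : 1 - ρ₂ ^ 2 ≤ 1 - ‖z‖ ^ 2 := by nlinarith [norm_nonneg z]
      have h1 : (1 - ρ₂ ^ 2) / 4 * T ≤ poisson μ z := by
        refine le_trans ?_ (poisson_lower μ hsupp hz1)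
        have h0 : (1 - ρ₂ ^ 2) / 4 ≤ (1 - ‖z‖ ^ 2) / 4 :=
          (div_le_div_iff_of_pos_right (by norm_num : (0:ℝ) < 4)).2 hzsq
        exact mul_le_mul_of_nonneg_right h0 hT.le
      have h2 : (1 - ρ₂ ^ 2) ^ (m - 1) ≤ (1 - ‖z‖ ^ 2) ^ (m - 1) :=
        pow_le_pow_left₀ hρ₂sq.le hzsq _
      rw [hδdef]
      apply mul_le_mul h1 h2 (by positivity) ?_
      exact le_trans (by positivity) h1
    -- chain of inequalities
    have hch1 : ENNReal.ofReal (Real.pi * R ^ 2 * ‖g z₀‖ ^ 2) * ENNReal.ofReal δ ≤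
        ∫⁻ z in ball z₀ R, (‖g z‖₊ : ℝ≥0∞) ^ 2 *
          ENNReal.ofReal (poisson μ z * (1 - ‖z‖ ^ 2) ^ (m - 1)) ∂volume := by
      have hstep0 : ENNReal.ofReal (Real.pi * R ^ 2 * ‖g z₀‖ ^ 2) * ENNReal.ofReal δ ≤
          ∫⁻ z in ball z₀ R, (‖g z‖₊ : ℝ≥0∞) ^ 2 * ENNReal.ofReal δ ∂volume := by
        rw [lintegral_mul_const' _ _ ENNReal.ofReal_ne_top]
        exact mul_le_mul_left (areaMVP hR0 hgd) _
      refine le_trans hstep0 (lintegral_mono_ae ?_)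
      refine (ae_restrict_iff' measurableSet_ball).2 (Eventually.of_forall ?_)
      intro z hz
      exact mul_le_mul_right (ENNReal.ofReal_le_ofReal (hweight z hz)) _
    have hch2 : ∫⁻ z in ball z₀ R, (‖g z‖₊ : ℝ≥0∞) ^ 2 *
          ENNReal.ofReal (poisson μ z * (1 - ‖z‖ ^ 2) ^ (m - 1)) ∂volume ≤
        ∫⁻ z in ball (0:ℂ) 1, (‖g z‖₊ : ℝ≥0∞) ^ 2 *
          ENNReal.ofReal (poisson μ z * (1 - ‖z‖ ^ 2) ^ (m - 1)) ∂volume :=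
      lintegral_mono' (Measure.restrict_mono
        (fun x hx => hsubcb (ball_subset_closedBall hx)) le_rfl) le_rfl
    have hDmu : Dmu μ m f = ENNReal.ofReal c₁ *
        (ENNReal.ofReal (1 / Real.pi) * ∫⁻ z in ball (0:ℂ) 1, (‖g z‖₊ : ℝ≥0∞) ^ 2 *
          ENNReal.ofReal (poisson μ z * (1 - ‖z‖ ^ 2) ^ (m - 1)) ∂volume) := by
      rw [Dmu, normArea, lintegral_smul_measure, smul_eq_mul]
    calc ENNReal.ofReal (ε * ‖g z₀‖ ^ 2)
        = ENNReal.ofReal c₁ * (ENNReal.ofReal (1 / Real.pi) *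
            (ENNReal.ofReal (Real.pi * R ^ 2 * ‖g z₀‖ ^ 2) * ENNReal.ofReal δ)) := by
          rw [← ENNReal.ofReal_mul (by positivity), ← ENNReal.ofReal_mul (by positivity),
            ← ENNReal.ofReal_mul hc₁0.le]
          congr 1
          have hπ : Real.pi ≠ 0 := Real.pi_ne_zero
          rw [hεdef]
          field_simp
      _ ≤ ENNReal.ofReal c₁ * (ENNReal.ofReal (1 / Real.pi) *
            ∫⁻ z in ball z₀ R, (‖g z‖₊ : ℝ≥0∞) ^ 2 *
              ENNReal.ofReal (poisson μ z * (1 - ‖z‖ ^ 2) ^ (m - 1)) ∂volume) := by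
          exact mul_le_mul_right (mul_le_mul_right hch1 _) _
      _ ≤ ENNReal.ofReal c₁ * (ENNReal.ofReal (1 / Real.pi) *
            ∫⁻ z in ball (0:ℂ) 1, (‖g z‖₊ : ℝ≥0∞) ^ 2 *
              ENNReal.ofReal (poisson μ z * (1 - ‖z‖ ^ 2) ^ (m - 1)) ∂volume) := by
          exact mul_le_mul_right (mul_le_mul_right hch2 _) _
      _ = Dmu μ m f := hDmu.symm
  -- from the pointwise bound to a sup bound
  set B : ℝ := Real.sqrt ((Dmu μ m f).toReal / ε) with hBdef
  have hB0 : 0 ≤ B := Real.sqrt_nonneg _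
  have hgB : ∀ z₀ ∈ closedBall (0:ℂ) ρ, ‖g z₀‖ ≤ B := by
    intro z₀ hz₀
    have h1 := hpoint z₀ hz₀
    rw [ENNReal.ofReal_le_iff_le_toReal hD] at h1
    have h2 : ‖g z₀‖ ^ 2 ≤ (Dmu μ m f).toReal / ε := by
      rw [le_div_iff₀ hε0]
      nlinarith
    calc ‖g z₀‖ = Real.sqrt (‖g z₀‖ ^ 2) := by rw [Real.sqrt_sq (norm_nonneg _)]
      _ ≤ B := Real.sqrt_le_sqrt h2
  -- integrate the bound m times
  have hbound : ∀ k : ℕ, k ≤ m → ∀ z ∈ closedBall (0:ℂ) ρ, ‖iteratedDeriv (m - k) f z‖ ≤ B := by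
    intro k
    induction k with
    | zero =>
      intro _ z hz
      simpa [hgdef] using hgB z hz
    | succ k ih =>
      intro hk1 z hz
      have hk : k ≤ m := Nat.le_of_succ_le hk1
      have hj : m - (k + 1) < m := by omega
      have hjs : m - (k + 1) + 1 = m - k := by omega
      have h0m : (0:ℂ) ∈ closedBall (0:ℂ) ρ := mem_closedBall_self hρ0.le
      have hρsub : closedBall (0:ℂ) ρ ⊆ ball (0:ℂ) 1 := by
        intro x hx
        rw [mem_closedBall_zero_iff] at hx
        rw [mem_ball_zero_iff]
        linarith
      have hder : ∀ x ∈ closedBall (0:ℂ) ρ, HasDerivWithinAt (iteratedDeriv (m - (k + 1)) f)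
          (iteratedDeriv (m - (k + 1) + 1) f x) (closedBall (0:ℂ) ρ) x := by
        intro x hx
        have hdiff : DifferentiableAt ℂ (iteratedDeriv (m - (k + 1)) f) x := by
          rw [iteratedDeriv_eq_iterate]
          exact ((hA.iterated_deriv (m - (k + 1))) x (hρsub hx)).differentiableAt
        rw [iteratedDeriv_succ]
        exact hdiff.hasDerivAt.hasDerivWithinAt
      have hC : ∀ x ∈ closedBall (0:ℂ) ρ, ‖iteratedDeriv (m - (k + 1) + 1) f x‖ ≤ B := by
        intro x hx
        rw [hjs]
        exact ih hk x hx
      have hmv := (convex_closedBall (0:ℂ) ρ).norm_image_sub_le_of_norm_hasDerivWithin_le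
        hder hC h0m hz
      have h00 : iteratedDeriv (m - (k + 1)) f 0 = 0 := iteratedDeriv_zero_of_lt hp ha hj
      have hz1 : ‖z‖ ≤ 1 := by
        rw [mem_closedBall_zero_iff] at hz
        linarith
      calc ‖iteratedDeriv (m - (k + 1)) f z‖
          = ‖iteratedDeriv (m - (k + 1)) f z - iteratedDeriv (m - (k + 1)) f 0‖ := by
            rw [h00, sub_zero]
        _ ≤ B * ‖z - 0‖ := hmv
        _ ≤ B * 1 := by
            rw [sub_zero]
            exact mul_le_mul_of_nonneg_left hz1 hB0
        _ = B := mul_one B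
  have hfw : ‖f w‖ ≤ B := by
    have := hbound m le_rfl w (by rwa [mem_closedBall_zero_iff])
    simpa [iteratedDeriv_zero] using this
  have hfw2 : ‖f w‖ ^ 2 ≤ (Dmu μ m f).toReal / ε := by
    have h1 : ‖f w‖ ^ 2 ≤ B ^ 2 := pow_le_pow_left₀ (norm_nonneg _) hfw 2
    rwa [hBdef, Real.sq_sqrt (by positivity)] at h1
  calc ENNReal.ofReal (‖f w‖ ^ 2) ≤ ENNReal.ofReal ((Dmu μ m f).toReal / ε) :=
        ENNReal.ofReal_le_ofReal hfw2
    _ = ENNReal.ofReal (1 / ε) * Dmu μ m f := by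
        rw [div_eq_mul_inv, mul_comm, ← one_div, ENNReal.ofReal_mul (by positivity),
          ENNReal.ofReal_toReal hD]
end

section
/- Let m ≥ 1 and define cₙ = 1 if n is odd and cₙ = 0 if n is even. For every even n ≥ m, the operator A_c(m) acting on z^n (sending Σbⱼzʲ to Σⱼ(c_{j+1}bⱼ + Σ_{k>j}(c_{k+1}−cₖ)bₖ)zʲ) satisfies ‖A_c(m)(zⁿ)‖²_{σ,m−1} = Σ_{k=m−1}^{n} C(k, m−1) = C(n+1, m), where ‖·‖_{σ,m−1} is the norm on Ĥ_{σ,m−1}. -/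
open Finset

/-- The action of the operator `A_c(m)` on a coefficient sequence `b = (b_j)_{j ≥ m-1}`:
the `j`-th coefficient of the image is `c_{j+1} b_j + Σ_{k≥j+1} (c_{k+1} - c_k) b_k`. -/
noncomputable def AcCoef (c b : ℕ → ℝ) (j : ℕ) : ℝ :=
  c (j + 1) * b j + ∑' k : ℕ, if j + 1 ≤ k then (c (k + 1) - c k) * b k else 0

/-- The squared norm of `Ĥ_{σ,m-1}` applied to a coefficient sequence supported on
`{j : j ≥ m-1}`: `Σ_{j ≥ m-1} C(j, m-1) |b_j|²`. -/
noncomputable def normSqSigma (m : ℕ) (b : ℕ → ℝ) : ℝ :=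
  ∑' j : ℕ, if m - 1 ≤ j then (j.choose (m - 1) : ℝ) * (b j) ^ 2 else 0

theorem norm_Ac_monomial (m : ℕ) (hm : 1 ≤ m) (c : ℕ → ℝ)
    (hc : ∀ k, c k = if Odd k then 1 else 0)
    (n : ℕ) (hn : Even n) (hnm : m ≤ n) :
    normSqSigma m (AcCoef c (fun k => if k = n then 1 else 0)) =
        ∑ k ∈ Finset.Icc (m - 1) n, (k.choose (m - 1) : ℝ) ∧
      normSqSigma m (AcCoef c (fun k => if k = n then 1 else 0)) =
        ((n + 1).choose m : ℝ) := by
  have hcn1 : c (n + 1) = 1 := by rw [hc]; simp [Even.add_one hn]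
  have hcn : c n = 0 := by rw [hc]; simp [Nat.not_odd_iff_even.mpr hn]
  have hA : AcCoef c (fun k => if k = n then 1 else 0) =
      fun j => if j ≤ n then (1 : ℝ) else 0 := by
    funext j
    unfold AcCoef
    have htsum : (∑' k : ℕ, if j + 1 ≤ k then (c (k + 1) - c k) *
        (if k = n then (1:ℝ) else 0) else 0) = if j + 1 ≤ n then 1 else 0 := by
      rw [tsum_eq_single n]
      · by_cases h : j + 1 ≤ n <;> simp [h, hcn1, hcn]
      · intro k hk
        by_cases h : j + 1 ≤ k <;> simp [h, hk]
    rw [htsum]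
    rcases lt_trichotomy j n with h | h | h
    · simp [h.ne, Nat.succ_le_of_lt h, h.le]
    · simp [h, hcn1, show ¬ (n + 1 ≤ n) by omega]
    · have h1 : j ≠ n := by omega
      have h2 : ¬ (j + 1 ≤ n) := by omega
      have h3 : ¬ (j ≤ n) := by omega
      simp [h1, h2, h3]
  have hfirst : normSqSigma m (AcCoef c (fun k => if k = n then 1 else 0)) =
      ∑ k ∈ Finset.Icc (m - 1) n, (k.choose (m - 1) : ℝ) := by
    rw [hA]
    unfold normSqSigma
    rw [tsum_eq_sum (s := Finset.Icc (m - 1) n)]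
    · apply Finset.sum_congr rfl
      intro j hj
      simp only [Finset.mem_Icc] at hj
      simp [hj.1, hj.2]
    · intro j hj
      simp only [Finset.mem_Icc, not_and_or, not_le] at hj
      rcases hj with h | h
      · simp [h.not_ge]
      · by_cases h2 : m - 1 ≤ j <;> simp [h2, h.not_ge]
  refine ⟨hfirst, hfirst.trans ?_⟩
  rw [← Nat.cast_sum]
  norm_cast
  rw [Nat.sum_Icc_choose]
  congr 1
  omega
end
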